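/- De Finetti's theorem (vector case, special case of Aldous's theorem with one index): every Borel probability measure on ℝ^ℕ that is invariant and ergodic under the group of finite permutations of coordinates is an i.i.d. product measure ν^ℕ for some Borel probability measure ν on ℝ; equivalently, it is the law of (f(ξᵢ))ᵢ for a measurable f : [0,1] → ℝ and i.i.d. uniform ξᵢ. -/

import Mathlib

open MeasureTheory

def IsProductMeasure {ι α : Type*} [MeasurableSpace α] (μ : Measure α) (ν : Measure (ι → α)) :
    Prop :=
  ∀ (s : Finset ι) (A : ι → Set α), (∀ i, MeasurableSet (A i)) →
    ν {x | ∀ i ∈ s, x i ∈ A i} = ∏ i ∈ s, μ (A i)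

open Filter Set Topology
open scoped ENNReal
set_option linter.unusedSectionVars false
set_option maxHeartbeats 1000000

section DeFinettiAux

lemma measurable_tau (g : Equiv.Perm ℕ) : Measurable (fun (x : ℕ → ℝ) (n : ℕ) => x (g n)) :=
  measurable_pi_lambda _ (fun n => measurable_pi_apply (g n))

lemma P_preimage (P : Measure (ℕ → ℝ)) (hinv : ∀ g : Equiv.Perm ℕ, {n | g n ≠ n}.Finite →
      P.map (fun x n => x (g n)) = P)
    (g : Equiv.Perm ℕ) (hg : {n | g n ≠ n}.Finite) {S : Set (ℕ → ℝ)} (hS : MeasurableSet S) :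
    P ((fun x (n : ℕ) => x (g n)) ⁻¹' S) = P S := by
  conv_rhs => rw [← hinv g hg]
  rw [Measure.map_apply (measurable_tau g) hS]

lemma swap_finite (a b : ℕ) : {n | Equiv.swap a b n ≠ n}.Finite := by
  apply Set.Finite.subset ((Set.finite_singleton b).insert a)
  intro n hn
  by_contra h
  simp only [Set.mem_insert_iff, Set.mem_singleton_iff] at h
  push_neg at h
  exact hn (Equiv.swap_apply_of_ne_of_ne h.1 h.2)

lemma trans_finite (g₁ g₂ : Equiv.Perm ℕ) (h₁ : {k | g₁ k ≠ k}.Finite)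
    (h₂ : {k | g₂ k ≠ k}.Finite) : {k | (g₁.trans g₂) k ≠ k}.Finite := by
  apply Set.Finite.subset (h₁.union h₂)
  intro k hk
  by_contra h
  simp only [Set.mem_union, Set.mem_setOf_eq] at h
  push_neg at h
  apply hk
  simp [Equiv.trans_apply, h.1, h.2]

lemma exists_perm_pair {a b n n' : ℕ} (hab : a ≠ b) (hnn : n ≠ n') :
    ∃ g : Equiv.Perm ℕ, {k | g k ≠ k}.Finite ∧ g a = n ∧ g b = n' := by
  set b' := Equiv.swap a n b with hb'
  have hb'n : b' ≠ n := by
    simp only [hb']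
    intro h
    have := Equiv.swap_apply_eq_iff.mp h
    simp only [Equiv.swap_apply_right] at this
    exact hab this.symm
  refine ⟨(Equiv.swap a n).trans (Equiv.swap b' n'), trans_finite _ _ (swap_finite _ _) (swap_finite _ _), ?_, ?_⟩
  · simp only [Equiv.trans_apply, Equiv.swap_apply_left]
    exact Equiv.swap_apply_of_ne_of_ne (Ne.symm hb'n) hnn
  · simp only [Equiv.trans_apply, ← hb', Equiv.swap_apply_left]


lemma meas_B {D : Set ℝ} (hD : MeasurableSet D) (n : ℕ) :
    MeasurableSet {x : ℕ → ℝ | x n ∈ D} := (measurable_pi_apply n) hD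

lemma meas_C (s : Finset ℕ) (A : ℕ → Set ℝ) (hA : ∀ i, MeasurableSet (A i)) :
    MeasurableSet {x : ℕ → ℝ | ∀ i ∈ s, x i ∈ A i} := by
  have h : {x : ℕ → ℝ | ∀ i ∈ s, x i ∈ A i} = ⋂ i ∈ (s : Set ℕ), (fun x : ℕ → ℝ => x i) ⁻¹' A i := by
    ext x; simp
  rw [h]
  exact MeasurableSet.biInter s.countable_toSet fun i _ => (measurable_pi_apply i) (hA i)

variable {P : Measure (ℕ → ℝ)}

lemma P_B_const (hinv : ∀ g : Equiv.Perm ℕ, {n | g n ≠ n}.Finite → P.map (fun x n => x (g n)) = P)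
    {D : Set ℝ} (hD : MeasurableSet D) (n m : ℕ) :
    P {x | x n ∈ D} = P {x | x m ∈ D} := by
  have h := P_preimage P hinv (Equiv.swap m n) (swap_finite m n) (meas_B hD m)
  have hpre : (fun x (k : ℕ) => x (Equiv.swap m n k)) ⁻¹' {x | x m ∈ D}
      = {x : ℕ → ℝ | x n ∈ D} := by
    ext x; simp [Equiv.swap_apply_left]
  rwa [hpre] at h

lemma P_BB_const (hinv : ∀ g : Equiv.Perm ℕ, {n | g n ≠ n}.Finite → P.map (fun x n => x (g n)) = P)
    {D : Set ℝ} (hD : MeasurableSet D) {n n' m m' : ℕ}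
    (h1 : n ≠ n') (h2 : m ≠ m') :
    P ({x | x n ∈ D} ∩ {x | x n' ∈ D}) = P ({x | x m ∈ D} ∩ {x | x m' ∈ D}) := by
  obtain ⟨g, hg, hga, hgb⟩ := exists_perm_pair h2 h1
  have h := P_preimage P hinv g hg ((meas_B hD m).inter (meas_B hD m'))
  have hpre : (fun x (k : ℕ) => x (g k)) ⁻¹' ({x | x m ∈ D} ∩ {x | x m' ∈ D})
      = ({x : ℕ → ℝ | x n ∈ D} ∩ {x | x n' ∈ D}) := by
    ext x
    simp only [Set.mem_preimage, Set.mem_inter_iff, Set.mem_setOf_eq, hga, hgb]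
  rwa [hpre] at h

lemma P_CB_const (hinv : ∀ g : Equiv.Perm ℕ, {n | g n ≠ n}.Finite → P.map (fun x n => x (g n)) = P)
    (s : Finset ℕ) (A : ℕ → Set ℝ) (hA : ∀ i, MeasurableSet (A i))
    {D : Set ℝ} (hD : MeasurableSet D) {M n n' : ℕ} (hM : ∀ i ∈ s, i < M)
    (hn : M ≤ n) (hn' : M ≤ n') :
    P ({x | ∀ i ∈ s, x i ∈ A i} ∩ {x | x n ∈ D})
      = P ({x | ∀ i ∈ s, x i ∈ A i} ∩ {x | x n' ∈ D}) := by
  rcases eq_or_ne n n' with rfl | hne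
  · rfl
  have hfix : ∀ i ∈ s, Equiv.swap n n' i = i := fun i hi =>
    Equiv.swap_apply_of_ne_of_ne (by have := hM i hi; omega) (by have := hM i hi; omega)
  have h := P_preimage P hinv (Equiv.swap n n') (swap_finite n n')
    ((meas_C s A hA).inter (meas_B hD n'))
  have hpre : (fun x (k : ℕ) => x (Equiv.swap n n' k)) ⁻¹' ({x : ℕ → ℝ | ∀ i ∈ s, x i ∈ A i} ∩ {x | x n' ∈ D})
      = {x : ℕ → ℝ | ∀ i ∈ s, x i ∈ A i} ∩ {x | x n ∈ D} := by
    ext x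
    simp only [Set.mem_preimage, Set.mem_inter_iff, Set.mem_setOf_eq, Equiv.swap_apply_right]
    constructor
    · rintro ⟨h1, h2⟩
      exact ⟨fun i hi => by have := h1 i hi; rwa [hfix i hi] at this, h2⟩
    · rintro ⟨h1, h2⟩
      exact ⟨fun i hi => by rw [hfix i hi]; exact h1 i hi, h2⟩
  rwa [hpre] at h


lemma ae_const_of_zero_one {α : Type*} [MeasurableSpace α] (P : Measure α) [IsProbabilityMeasure P]
    (f : α → ℝ) (hmeas : Measurable f) (hrange : ∀ x, f x ∈ Set.Icc (0:ℝ) 1)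
    (hf01 : ∀ t : ℝ, P {x | f x ≤ t} = 0 ∨ P {x | f x ≤ t} = 1) :
    ∃ t₀ : ℝ, ∀ᵐ x ∂P, f x = t₀ := by
  set T := {t : ℝ | P {x | f x ≤ t} = 1} with hT
  have hne : (1:ℝ) ∈ T := by
    have : {x | f x ≤ (1:ℝ)} = Set.univ := Set.eq_univ_of_forall fun x => (hrange x).2
    simp [hT, this]
  have hbdd : BddBelow T := by
    refine ⟨0, fun t ht => ?_⟩
    by_contra hlt
    push_neg at hlt
    have : {x | f x ≤ t} = (∅ : Set α) := by
      ext x; simp only [Set.mem_setOf_eq, Set.mem_empty_iff_false, iff_false]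
      intro h; linarith [(hrange x).1]
    rw [hT, Set.mem_setOf_eq, this] at ht
    simp at ht
  set t₀ := sInf T with ht₀
  have hub : ∀ t : ℝ, t₀ < t → P {x | f x ≤ t} = 1 := by
    intro t ht
    obtain ⟨t', ht', htt⟩ := (csInf_lt_iff hbdd ⟨1, hne⟩).mp ht
    refine le_antisymm prob_le_one ?_
    calc (1:ℝ≥0∞) = P {x | f x ≤ t'} := ht'.symm
    _ ≤ P {x | f x ≤ t} := measure_mono fun x hx => le_trans hx htt.le
  have hlb : ∀ t : ℝ, t < t₀ → P {x | f x ≤ t} = 0 := by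
    intro t ht
    rcases hf01 t with h | h
    · exact h
    · exact absurd (csInf_le hbdd h) (not_le.mpr ht)
  refine ⟨t₀, ?_⟩
  have h1 : P {x | f x < t₀} = 0 := by
    have hsub : {x | f x < t₀} ⊆ ⋃ n : ℕ, {x | f x ≤ t₀ - 1/(n+1)} := by
      intro x hx
      simp only [Set.mem_setOf_eq] at hx
      obtain ⟨n, hn⟩ := exists_nat_one_div_lt (sub_pos.mpr hx)
      exact Set.mem_iUnion.mpr ⟨n, by simp only [Set.mem_setOf_eq]; linarith⟩
    refine measure_mono_null hsub (measure_iUnion_null fun n => hlb _ ?_)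
    have : (0:ℝ) < 1/(n+1) := by positivity
    linarith
  have h2 : P {x | t₀ < f x} = 0 := by
    have hsub : {x | t₀ < f x} ⊆ ⋃ n : ℕ, {x | f x ≤ t₀ + 1/(n+1)}ᶜ := by
      intro x hx
      simp only [Set.mem_setOf_eq] at hx
      obtain ⟨n, hn⟩ := exists_nat_one_div_lt (sub_pos.mpr hx)
      refine Set.mem_iUnion.mpr ⟨n, ?_⟩
      simp only [Set.mem_compl_iff, Set.mem_setOf_eq, not_le]
      linarith
    refine measure_mono_null hsub (measure_iUnion_null fun n => ?_)
    have hms : MeasurableSet {x | f x ≤ t₀ + 1/(n+1)} := hmeas measurableSet_Iic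
    rw [prob_compl_eq_zero_iff hms]
    refine hub _ ?_
    have : (0:ℝ) < 1/(n+1) := by positivity
    linarith
  have : P ({x | f x < t₀} ∪ {x | t₀ < f x}) = 0 :=
    measure_union_null h1 h2
  rw [ae_iff]
  refine measure_mono_null ?_ this
  intro x hx
  simp only [Set.mem_setOf_eq] at hx
  rcases lt_or_gt_of_ne hx with h | h
  · exact Or.inl h
  · exact Or.inr h


lemma indep_step (P : Measure (ℕ → ℝ)) [IsProbabilityMeasure P]
    (hinv : ∀ g : Equiv.Perm ℕ, {n | g n ≠ n}.Finite → P.map (fun x n => x (g n)) = P)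
    (herg : ∀ S : Set (ℕ → ℝ), MeasurableSet S →
      (∀ g : Equiv.Perm ℕ, {n | g n ≠ n}.Finite → (fun x (n : ℕ) => x (g n)) ⁻¹' S = S) →
      P S = 0 ∨ P S = 1)
    (s : Finset ℕ) (A : ℕ → Set ℝ) (hA : ∀ i, MeasurableSet (A i))
    {D : Set ℝ} (hD : MeasurableSet D) {M : ℕ} (hM : ∀ i ∈ s, i < M)
    {n₀ : ℕ} (hn₀ : M ≤ n₀) :
    P ({x | ∀ i ∈ s, x i ∈ A i} ∩ {x | x n₀ ∈ D})
      = P {x | ∀ i ∈ s, x i ∈ A i} * P {x | x 0 ∈ D} := by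
  set C : Set (ℕ → ℝ) := {x | ∀ i ∈ s, x i ∈ A i} with hCdef
  have hC : MeasurableSet C := meas_C s A hA
  set B : ℕ → Set (ℕ → ℝ) := fun n => {x | x n ∈ D} with hBdef
  have hB : ∀ n, MeasurableSet (B n) := fun n => meas_B hD n
  set e : ℕ → (ℕ → ℝ) → ℝ := fun n => (B n).indicator (fun _ => (1:ℝ)) with hedef
  have he_meas : ∀ n, Measurable (e n) := fun n => measurable_const.indicator (hB n)
  have he0 : ∀ n x, 0 ≤ e n x := fun n x => Set.indicator_nonneg (fun _ _ => zero_le_one) x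
  have he1 : ∀ n x, e n x ≤ 1 := by
    intro n x
    by_cases h : x ∈ B n <;> simp [hedef, Set.indicator, h]
  have he_int : ∀ n, Integrable (e n) P := by
    intro n
    rw [hedef]
    rw [integrable_indicator_iff (hB n)]
    exact (integrableOn_const (measure_ne_top P _))
  have int_e : ∀ n, ∫ x, e n x ∂P = (P (B n)).toReal := by
    intro n
    rw [hedef]
    rw [integral_indicator_const (1:ℝ) (hB n)]
    simp [measureReal_def]
  -- products of indicators
  have hprod_ind : ∀ (S T : Set (ℕ → ℝ)) (x : ℕ → ℝ),
      S.indicator (fun _ => (1:ℝ)) x * T.indicator (fun _ => (1:ℝ)) x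
        = (S ∩ T).indicator (fun _ => (1:ℝ)) x := by
    intro S T x
    by_cases hS : x ∈ S <;> by_cases hT : x ∈ T <;>
      simp [Set.indicator, hS, hT, Set.mem_inter_iff]
  -- blocks
  set Nk : ℕ → ℕ := fun k => 4 ^ k with hNkdef
  have hNkpos : ∀ k, 0 < (Nk k : ℝ) := by
    intro k; rw [hNkdef]; positivity
  set I : ℕ → Finset ℕ := fun k => Finset.Ico (M + k) (M + k + Nk k) with hIdef
  have hIcard : ∀ k, (I k).card = Nk k := by
    intro k; rw [hIdef]; simp
  have hIge : ∀ k n, n ∈ I k → M + k ≤ n := by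
    intro k n hn; rw [hIdef] at hn; exact (Finset.mem_Ico.mp hn).1
  set g : ℕ → (ℕ → ℝ) → ℝ := fun k x => (Nk k : ℝ)⁻¹ * ∑ n ∈ I k, e n x with hgdef
  have hg_meas : ∀ k, Measurable (g k) := by
    intro k
    exact (Finset.measurable_sum (I k) (fun n _ => he_meas n)).const_mul _
  have hg0 : ∀ k x, 0 ≤ g k x := by
    intro k x
    exact mul_nonneg (by positivity) (Finset.sum_nonneg fun n _ => he0 n x)
  have hg1 : ∀ k x, g k x ≤ 1 := by
    intro k x
    rw [hgdef]
    have h1 : ∑ n ∈ I k, e n x ≤ (I k).card • (1:ℝ) :=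
      Finset.sum_le_card_nsmul _ _ _ (fun n _ => he1 n x)
    rw [hIcard k, nsmul_eq_mul, mul_one] at h1
    rw [inv_mul_le_iff₀ (hNkpos k), mul_one]
    exact h1
  have hg_int : ∀ k, Integrable (g k) P := by
    intro k
    exact (integrable_finset_sum (I k) (fun n _ => he_int n)).const_mul _
  -- constants
  set β : ℝ := (P (B M)).toReal with hβdef
  set dR : ℝ := (P (B M ∩ B (M+1))).toReal with hdRdef
  set c : ℝ := (P (C ∩ B M)).toReal with hcdef
  have hβn : ∀ n, (P (B n)).toReal = β := fun n => by
    rw [hβdef]; exact congrArg ENNReal.toReal (P_B_const hinv hD n M)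
  have hdnn : ∀ n n', n ≠ n' → (P (B n ∩ B n')).toReal = dR := fun n n' h => by
    rw [hdRdef]
    exact congrArg ENNReal.toReal (P_BB_const hinv hD h (by omega))
  have hcn : ∀ n, M ≤ n → (P (C ∩ B n)).toReal = c := fun n h => by
    rw [hcdef]
    exact congrArg ENNReal.toReal (P_CB_const hinv s A hA hD hM h (le_refl M))
  have hβ1 : β ≤ 1 := by
    rw [hβdef]
    exact ENNReal.toReal_le_of_le_ofReal zero_le_one (by simpa using prob_le_one)
  have hd0 : 0 ≤ dR := ENNReal.toReal_nonneg
  have hdβ : dR ≤ β := by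
    rw [hdRdef, hβdef]
    exact ENNReal.toReal_mono (measure_ne_top P _) (measure_mono Set.inter_subset_left)
  -- integrals of g
  have int_g : ∀ k, ∫ x, g k x ∂P = β := by
    intro k
    rw [hgdef]
    simp only
    rw [integral_const_mul, integral_finset_sum _ (fun n _ => he_int n)]
    have : ∀ n ∈ I k, ∫ x, e n x ∂P = β := fun n _ => by rw [int_e n, hβn n]
    rw [Finset.sum_congr rfl this, Finset.sum_const, hIcard k, nsmul_eq_mul]
    have := hNkpos k
    field_simp
  have he_int_C : ∀ n, Integrable (fun x => C.indicator (fun _ => (1:ℝ)) x * e n x) P := by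
    intro n
    have : (fun x => C.indicator (fun _ => (1:ℝ)) x * e n x)
        = (C ∩ B n).indicator (fun _ => (1:ℝ)) := by
      funext x; rw [hedef]; exact hprod_ind C (B n) x
    rw [this, integrable_indicator_iff (hC.inter (hB n))]
    exact integrableOn_const (measure_ne_top P _)
  have int_Cg : ∀ k, ∫ x, C.indicator (fun _ => (1:ℝ)) x * g k x ∂P = c := by
    intro k
    have heq : ∀ x, C.indicator (fun _ => (1:ℝ)) x * g k x
        = (Nk k : ℝ)⁻¹ * ∑ n ∈ I k, C.indicator (fun _ => (1:ℝ)) x * e n x := by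
      intro x
      calc C.indicator (fun _ => (1:ℝ)) x * g k x
          = (Nk k : ℝ)⁻¹ * (C.indicator (fun _ => (1:ℝ)) x * ∑ n ∈ I k, e n x) := by
            rw [hgdef]; ring
        _ = (Nk k : ℝ)⁻¹ * ∑ n ∈ I k, C.indicator (fun _ => (1:ℝ)) x * e n x := by
            rw [Finset.mul_sum]
    simp only [heq]
    rw [integral_const_mul, integral_finset_sum _ (fun n _ => he_int_C n)]
    have hterm : ∀ n ∈ I k, ∫ x, C.indicator (fun _ => (1:ℝ)) x * e n x ∂P = c := by
      intro n hn
      have : (fun x => C.indicator (fun _ => (1:ℝ)) x * e n x)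
          = (C ∩ B n).indicator (fun _ => (1:ℝ)) := by
        funext x; rw [hedef]; exact hprod_ind C (B n) x
      rw [this, integral_indicator_const (1:ℝ) (hC.inter (hB n)), smul_eq_mul, mul_one]
      exact hcn n (le_trans (Nat.le_add_right M k) (hIge k n hn))
    rw [Finset.sum_congr rfl hterm, Finset.sum_const, hIcard k, nsmul_eq_mul]
    have := hNkpos k
    field_simp
  -- double sums
  have hee_int : ∀ n n', Integrable (fun x => e n x * e n' x) P := by
    intro n n'
    have : (fun x => e n x * e n' x) = (B n ∩ B n').indicator (fun _ => (1:ℝ)) := by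
      funext x; rw [hedef]; exact hprod_ind (B n) (B n') x
    rw [this, integrable_indicator_iff ((hB n).inter (hB n'))]
    exact integrableOn_const (measure_ne_top P _)
  have int_ee : ∀ n n', ∫ x, e n x * e n' x ∂P = (P (B n ∩ B n')).toReal := by
    intro n n'
    have : (fun x => e n x * e n' x) = (B n ∩ B n').indicator (fun _ => (1:ℝ)) := by
      funext x; rw [hedef]; exact hprod_ind (B n) (B n') x
    rw [this, integral_indicator_const (1:ℝ) ((hB n).inter (hB n')), smul_eq_mul, mul_one, measureReal_def]
  have int_gg : ∀ k l, ∫ x, g k x * g l x ∂P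
      = (Nk k : ℝ)⁻¹ * (Nk l : ℝ)⁻¹ * ∑ n ∈ I k, ∑ n' ∈ I l, (P (B n ∩ B n')).toReal := by
    intro k l
    have heq : ∀ x, g k x * g l x
        = (Nk k : ℝ)⁻¹ * (Nk l : ℝ)⁻¹ * ∑ n ∈ I k, ∑ n' ∈ I l, e n x * e n' x := by
      intro x
      calc g k x * g l x
          = (Nk k : ℝ)⁻¹ * (Nk l : ℝ)⁻¹ * ((∑ n ∈ I k, e n x) * ∑ n' ∈ I l, e n' x) := by
            rw [hgdef]; ring
        _ = (Nk k : ℝ)⁻¹ * (Nk l : ℝ)⁻¹ * ∑ n ∈ I k, ∑ n' ∈ I l, e n x * e n' x := by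
            rw [Finset.sum_mul_sum]
    simp only [heq]
    rw [integral_const_mul, integral_finset_sum _ (fun n _ => integrable_finset_sum _ (fun n' _ => hee_int n n'))]
    congr 1
    refine Finset.sum_congr rfl fun n _ => ?_
    rw [integral_finset_sum _ (fun n' _ => hee_int n n')]
    exact Finset.sum_congr rfl fun n' _ => int_ee n n'
  have hgg_int : ∀ k l, Integrable (fun x => g k x * g l x) P := by
    intro k l
    have heq : (fun x => g k x * g l x)
        = fun x => (Nk k : ℝ)⁻¹ * (Nk l : ℝ)⁻¹ * ∑ n ∈ I k, ∑ n' ∈ I l, e n x * e n' x := by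
      funext x
      calc g k x * g l x
          = (Nk k : ℝ)⁻¹ * (Nk l : ℝ)⁻¹ * ((∑ n ∈ I k, e n x) * ∑ n' ∈ I l, e n' x) := by
            rw [hgdef]; ring
        _ = (Nk k : ℝ)⁻¹ * (Nk l : ℝ)⁻¹ * ∑ n ∈ I k, ∑ n' ∈ I l, e n x * e n' x := by
            rw [Finset.sum_mul_sum]
    rw [heq]
    exact (integrable_finset_sum _ (fun n _ => integrable_finset_sum _ (fun n' _ => hee_int n n'))).const_mul _
  have hNk1 : ∀ k, 1 ≤ Nk k := fun k => Nat.one_le_pow _ _ (by norm_num)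
  have int_gsq : ∀ k, ∫ x, g k x * g k x ∂P = dR + (β - dR) * (Nk k : ℝ)⁻¹ := by
    intro k
    rw [int_gg k k]
    have hsum : ∀ n ∈ I k, ∑ n' ∈ I k, (P (B n ∩ B n')).toReal
        = β + ((Nk k : ℝ) - 1) * dR := by
      intro n hn
      rw [← Finset.add_sum_erase _ _ hn, Set.inter_self, hβn n]
      congr 1
      rw [Finset.sum_congr rfl (fun n' hn' => hdnn n n' (Ne.symm (Finset.mem_erase.mp hn').1)),
        Finset.sum_const, Finset.card_erase_of_mem hn, hIcard, nsmul_eq_mul]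
      rw [Nat.cast_sub (hNk1 k)]
      norm_num
    rw [Finset.sum_congr rfl hsum, Finset.sum_const, hIcard, nsmul_eq_mul]
    have hne : (Nk k : ℝ) ≠ 0 := ne_of_gt (hNkpos k)
    field_simp
    ring
  have int_cross : ∀ k l, dR ≤ ∫ x, g k x * g l x ∂P := by
    intro k l
    rw [int_gg k l]
    have hterm : ∀ n n', dR ≤ (P (B n ∩ B n')).toReal := by
      intro n n'
      rcases eq_or_ne n n' with rfl | h
      · rw [Set.inter_self, hβn n]; exact hdβ
      · rw [hdnn n n' h]
    have hsum : ((Nk k : ℝ) * (Nk l : ℝ)) * dR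
        ≤ ∑ n ∈ I k, ∑ n' ∈ I l, (P (B n ∩ B n')).toReal := by
      calc ((Nk k : ℝ) * (Nk l : ℝ)) * dR = ∑ _n ∈ I k, ∑ _n' ∈ I l, dR := by
            simp [Finset.sum_const, hIcard, nsmul_eq_mul]; ring
        _ ≤ _ := Finset.sum_le_sum (fun n _ => Finset.sum_le_sum (fun n' _ => hterm n n'))
    have hpos : (0:ℝ) < (Nk k : ℝ)⁻¹ * (Nk l : ℝ)⁻¹ := by positivity
    have h2 := mul_le_mul_of_nonneg_left hsum (le_of_lt hpos)
    calc dR = (Nk k : ℝ)⁻¹ * (Nk l : ℝ)⁻¹ * (((Nk k : ℝ) * (Nk l : ℝ)) * dR) := by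
          have := hNkpos k; have := hNkpos l
          field_simp
      _ ≤ _ := h2
  have int_diff_sq : ∀ k l, ∫ x, (g k x - g l x)^2 ∂P
      ≤ (β - dR) * ((Nk k : ℝ)⁻¹ + (Nk l : ℝ)⁻¹) := by
    intro k l
    have hexp : ∀ x : ℕ → ℝ, (g k x - g l x)^2
        = g k x * g k x - 2*(g k x * g l x) + g l x * g l x := fun x => by ring
    simp only [hexp]
    have hInt1 : Integrable (fun x => g k x * g k x - 2*(g k x * g l x)) P :=
      (hgg_int k k).sub ((hgg_int k l).const_mul 2)
    have hInt2 : Integrable (fun x => 2*(g k x * g l x)) P := (hgg_int k l).const_mul 2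
    rw [integral_add hInt1 (hgg_int l l), integral_sub (hgg_int k k) hInt2, integral_const_mul]
    rw [int_gsq k, int_gsq l]
    have := int_cross k l
    linarith
  have hdiff_int : ∀ k l, Integrable (fun x => (g k x - g l x)^2) P := by
    intro k l
    have heq2 : (fun x => (g k x - g l x)^2)
        = fun x => g k x * g k x - 2*(g k x * g l x) + g l x * g l x :=
      funext fun x => by ring
    rw [heq2]
    exact ((hgg_int k k).sub ((hgg_int k l).const_mul 2)).add (hgg_int l l)
  have hNkcast : ∀ k, (Nk k : ℝ) = (4:ℝ)^k := by
    intro k; rw [hNkdef]; push_cast; ring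
  have int_abs : ∀ k, ∫ x, |g (k+1) x - g k x| ∂P ≤ (3/2) * ((2:ℝ)⁻¹)^k := by
    intro k
    have hu : (0:ℝ) < (2:ℝ)^k := by positivity
    have hptw : ∀ x, |g (k+1) x - g k x|
        ≤ ((2:ℝ)^k * (g (k+1) x - g k x)^2 + ((2:ℝ)⁻¹)^k)/2 := by
      intro x
      have h1 : ((2:ℝ)^k * |g (k+1) x - g k x| - 1)^2 ≥ 0 := sq_nonneg _
      have h2 : ((2:ℝ)⁻¹)^k * (2:ℝ)^k = 1 := by
        rw [← mul_pow]; norm_num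
      have h3 : |g (k+1) x - g k x|^2 = (g (k+1) x - g k x)^2 := sq_abs _
      set d := g (k+1) x - g k x with hd
      set i := ((2:ℝ)⁻¹)^k with hi
      have hi0 : (0:ℝ) ≤ i := by positivity
      have key : 2*((2:ℝ)^k * |d|) ≤ ((2:ℝ)^k)^2 * d^2 + 1 := by nlinarith [h1, h3]
      have this2 := mul_le_mul_of_nonneg_left key hi0
      have h8 : i * (2 * ((2:ℝ)^k * |d|)) = 2 * |d| := by
        rw [show i * (2*((2:ℝ)^k*|d|)) = 2*((i*(2:ℝ)^k)*|d|) from by ring, h2]; ring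
      have h9 : i * (((2:ℝ)^k)^2 * d^2 + 1) = (2:ℝ)^k * d^2 + i := by
        rw [show i*(((2:ℝ)^k)^2*d^2+1) = ((i*(2:ℝ)^k)*((2:ℝ)^k*d^2)) + i from by ring, h2]; ring
      rw [h8, h9] at this2
      rw [hd] at this2 ⊢
      rw [hi] at this2 ⊢
      linarith [this2]
    have hrhs_int : Integrable
        (fun x => ((2:ℝ)^k * (g (k+1) x - g k x)^2 + ((2:ℝ)⁻¹)^k)/2) P :=
      (((hdiff_int (k+1) k).const_mul _).add (integrable_const _)).div_const 2
    have h1 : ∫ x, |g (k+1) x - g k x| ∂P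
        ≤ ∫ x, ((2:ℝ)^k * (g (k+1) x - g k x)^2 + ((2:ℝ)⁻¹)^k)/2 ∂P :=
      integral_mono (((hg_int (k+1)).sub (hg_int k)).abs) hrhs_int hptw
    have h2 : ∫ x, ((2:ℝ)^k * (g (k+1) x - g k x)^2 + ((2:ℝ)⁻¹)^k)/2 ∂P
        = ((2:ℝ)^k * ∫ x, (g (k+1) x - g k x)^2 ∂P + ((2:ℝ)⁻¹)^k)/2 := by
      rw [integral_div, integral_add ((hdiff_int (k+1) k).const_mul _) (integrable_const _),
        integral_const_mul, integral_const]
      simp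
    have hb : ∫ x, (g (k+1) x - g k x)^2 ∂P ≤ 2 * ((Nk k : ℝ))⁻¹ := by
      refine le_trans (int_diff_sq (k+1) k) ?_
      have h4 : ((Nk (k+1) : ℝ))⁻¹ ≤ ((Nk k : ℝ))⁻¹ := by
        apply inv_anti₀ (hNkpos k)
        exact_mod_cast pow_le_pow_right₀ (by norm_num : (1:ℕ) ≤ 4) (Nat.le_succ k)
      have h5 : (β - dR) ≤ 1 := by linarith
      have h6 : (0:ℝ) ≤ β - dR := by linarith
      calc (β - dR) * ((Nk (k+1) : ℝ)⁻¹ + (Nk k : ℝ)⁻¹)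
          ≤ 1 * ((Nk k : ℝ)⁻¹ + (Nk k : ℝ)⁻¹) :=
            mul_le_mul h5 (add_le_add h4 le_rfl) (by positivity) zero_le_one
        _ = 2 * ((Nk k : ℝ))⁻¹ := by ring
    have hfin : ((2:ℝ)^k * (2 * ((Nk k : ℝ))⁻¹) + ((2:ℝ)⁻¹)^k)/2 = (3/2) * ((2:ℝ)⁻¹)^k := by
      rw [hNkcast k]
      have h4 : (4:ℝ)^k = (2:ℝ)^k * (2:ℝ)^k := by rw [← mul_pow]; norm_num
      have h5 : ((2:ℝ)⁻¹)^k = ((2:ℝ)^k)⁻¹ := by rw [inv_pow]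
      rw [h4, h5]
      field_simp
      ring
    calc ∫ x, |g (k+1) x - g k x| ∂P
        ≤ ((2:ℝ)^k * ∫ x, (g (k+1) x - g k x)^2 ∂P + ((2:ℝ)⁻¹)^k)/2 := h2 ▸ h1
      _ ≤ ((2:ℝ)^k * (2 * ((Nk k : ℝ))⁻¹) + ((2:ℝ)⁻¹)^k)/2 := by
          have := mul_le_mul_of_nonneg_left hb (le_of_lt hu)
          linarith
      _ = (3/2) * ((2:ℝ)⁻¹)^k := hfin
  -- a.e. convergence
  have hlint : ∀ k, ∫⁻ x, (‖g (k+1) x - g k x‖₊ : ℝ≥0∞) ∂P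
      ≤ ENNReal.ofReal ((3/2) * ((2:ℝ)⁻¹)^k) := by
    intro k
    have hint : Integrable (fun x => |g (k+1) x - g k x|) P :=
      ((hg_int (k+1)).sub (hg_int k)).abs
    have h1 := ofReal_integral_eq_lintegral_ofReal hint
      (ae_of_all _ fun x => abs_nonneg _)
    have h2 : ∫⁻ x, (‖g (k+1) x - g k x‖₊ : ℝ≥0∞) ∂P
        = ∫⁻ x, ENNReal.ofReal (|g (k+1) x - g k x|) ∂P := by
      congr 1
      funext x
      exact Real.enorm_eq_ofReal_abs _
    rw [h2, ← h1]
    exact ENNReal.ofReal_le_ofReal (int_abs k)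
  have hmeas' : ∀ k, Measurable fun x => (‖g (k+1) x - g k x‖₊ : ℝ≥0∞) :=
    fun k => ((hg_meas (k+1)).sub (hg_meas k)).nnnorm.coe_nnreal_ennreal
  have hsummable_geo : Summable (fun k : ℕ => (3/2) * ((2:ℝ)⁻¹)^k) :=
    (summable_geometric_of_lt_one (by norm_num) (by norm_num)).mul_left _
  have htot : ∫⁻ x, ∑' k, (‖g (k+1) x - g k x‖₊ : ℝ≥0∞) ∂P ≠ ⊤ := by
    rw [lintegral_tsum (fun k => (hmeas' k).aemeasurable)]
    have h1 : ∑' k, ∫⁻ x, (‖g (k+1) x - g k x‖₊ : ℝ≥0∞) ∂P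
        ≤ ∑' k, ENNReal.ofReal ((3/2) * ((2:ℝ)⁻¹)^k) :=
      ENNReal.tsum_le_tsum hlint
    have h2 : ∑' k, ENNReal.ofReal ((3/2) * ((2:ℝ)⁻¹)^k)
        = ENNReal.ofReal (∑' k, (3/2) * ((2:ℝ)⁻¹)^k) :=
      (ENNReal.ofReal_tsum_of_nonneg (fun k => by positivity) hsummable_geo).symm
    rw [h2] at h1
    exact ne_top_of_le_ne_top ENNReal.ofReal_ne_top h1
  have hConv_ae : ∀ᵐ x ∂P, ∃ l, Tendsto (fun k => g k x) atTop (𝓝 l) := by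
    have hae := ae_lt_top (Measurable.ennreal_tsum hmeas') htot
    filter_upwards [hae] with x hx
    have hs1 : Summable fun k => ‖g (k+1) x - g k x‖₊ := by
      rw [← ENNReal.tsum_coe_ne_top_iff_summable]
      exact hx.ne
    have hs2 : Summable fun k => g (k+1) x - g k x :=
      Summable.of_norm (by simpa [coe_nnnorm] using NNReal.summable_coe.mpr hs1)
    have htel : ∀ K, g K x = g 0 x + ∑ j ∈ Finset.range K, (g (j+1) x - g j x) := by
      intro K
      induction K with
      | zero => simp
      | succ n ih => rw [Finset.sum_range_succ, ← add_assoc, ← ih]; ring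
    refine ⟨g 0 x + ∑' j, (g (j+1) x - g j x), ?_⟩
    have hfun : (fun K => g K x) = fun K => g 0 x + ∑ j ∈ Finset.range K, (g (j+1) x - g j x) :=
      funext htel
    rw [hfun]
    exact tendsto_const_nhds.add hs2.hasSum.tendsto_sum_nat
  set Conv : Set (ℕ → ℝ) := {x | ∃ l, Tendsto (fun k => g k x) atTop (𝓝 l)} with hConvdef
  have hConv_meas : MeasurableSet Conv := measurableSet_exists_tendsto (fun k => hg_meas k)
  set f : (ℕ → ℝ) → ℝ := Conv.indicator (fun x => limsup (fun k => g k x) atTop) with hfdef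
  have hf_meas : Measurable f := (Measurable.limsup hg_meas).indicator hConv_meas
  have hf_tendsto : ∀ x ∈ Conv, Tendsto (fun k => g k x) atTop (𝓝 (f x)) := by
    intro x hx
    obtain ⟨l, hl⟩ := id hx
    have : f x = l := by
      rw [hfdef, Set.indicator_of_mem hx, hl.limsup_eq]
    rw [this]
    exact hl
  have hf01 : ∀ x, f x ∈ Set.Icc (0:ℝ) 1 := by
    intro x
    by_cases hx : x ∈ Conv
    · constructor
      · exact ge_of_tendsto (hf_tendsto x hx) (Eventually.of_forall fun k => hg0 k x)
      · exact le_of_tendsto (hf_tendsto x hx) (Eventually.of_forall fun k => hg1 k x)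
    · rw [hfdef, Set.indicator_of_notMem hx]
      exact ⟨le_refl 0, zero_le_one⟩
  -- invariance of f
  have hgshift : ∀ (π : Equiv.Perm ℕ), {n | π n ≠ n}.Finite →
      ∃ k₀ : ℕ, ∀ k, k₀ ≤ k → ∀ x : ℕ → ℝ, g k (fun n => x (π n)) = g k x := by
    intro π hπ
    rcases Set.Finite.bddAbove hπ with ⟨K, hK⟩
    refine ⟨K + 1, fun k hk x => ?_⟩
    rw [hgdef]
    simp only
    congr 1
    refine Finset.sum_congr rfl fun n hn => ?_
    have hnK : K < n := by
      have := hIge k n hn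
      omega
    have hfix : π n = n := by
      by_contra h
      have := hK (Set.mem_setOf_eq ▸ h : n ∈ {n | π n ≠ n})
      omega
    rw [hedef]
    simp only
    have hmem : ((fun n => x (π n)) ∈ B n) ↔ (x ∈ B n) := by
      rw [hBdef]
      simp only [Set.mem_setOf_eq, hfix]
    by_cases hb : x ∈ B n
    · rw [Set.indicator_of_mem (hmem.mpr hb), Set.indicator_of_mem hb]
    · rw [Set.indicator_of_notMem (fun h => hb (hmem.mp h)), Set.indicator_of_notMem hb]
  have hfinv : ∀ (π : Equiv.Perm ℕ), {n | π n ≠ n}.Finite →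
      ∀ x : ℕ → ℝ, f (fun n => x (π n)) = f x := by
    intro π hπ x
    obtain ⟨k₀, hk⟩ := hgshift π hπ
    have hev : (fun k => g k (fun n => x (π n))) =ᶠ[atTop] (fun k => g k x) :=
      eventually_atTop.mpr ⟨k₀, fun k hk' => hk k hk' x⟩
    have hmem : (fun n => x (π n)) ∈ Conv ↔ x ∈ Conv := by
      rw [hConvdef]
      simp only [Set.mem_setOf_eq]
      constructor
      · rintro ⟨l, hl⟩
        exact ⟨l, by rwa [tendsto_congr' hev] at hl⟩
      · rintro ⟨l, hl⟩
        exact ⟨l, by rwa [tendsto_congr' hev]⟩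
    by_cases hx : x ∈ Conv
    · rw [hfdef, Set.indicator_of_mem (hmem.mpr hx), Set.indicator_of_mem hx]
      exact limsup_congr hev
    · rw [hfdef, Set.indicator_of_notMem (fun h => hx (hmem.mp h)),
        Set.indicator_of_notMem hx]
  -- ergodicity: f is a.e. constant
  have hf01' : ∀ t : ℝ, P {x | f x ≤ t} = 0 ∨ P {x | f x ≤ t} = 1 := by
    intro t
    refine herg _ (hf_meas measurableSet_Iic) ?_
    intro π hπ
    ext x
    simp only [Set.mem_preimage, Set.mem_setOf_eq]
    rw [hfinv π hπ x]
  obtain ⟨t₀, ht₀⟩ := ae_const_of_zero_one P f hf_meas hf01 hf01'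
  have hconv_ae : ∀ᵐ x ∂P, Tendsto (fun k => g k x) atTop (𝓝 (f x)) :=
    hConv_ae.mono fun x hx => hf_tendsto x hx
  -- identification of limits
  have hint_f : ∫ x, f x ∂P = t₀ := by
    rw [integral_congr_ae (ht₀.mono fun x hx => hx)]
    simp [measure_univ]
  have hβt : β = t₀ := by
    have h1 : Tendsto (fun k => ∫ x, g k x ∂P) atTop (𝓝 (∫ x, f x ∂P)) := by
      refine tendsto_integral_of_dominated_convergence (fun _ => (1:ℝ))
        (fun k => (hg_meas k).aestronglyMeasurable) (integrable_const 1)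
        (fun k => ae_of_all _ fun x => ?_) hconv_ae
      rw [Real.norm_eq_abs, abs_of_nonneg (hg0 k x)]
      exact hg1 k x
    simp only [int_g] at h1
    rw [← hint_f]
    exact tendsto_const_nhds_iff.mp h1
  have hc : c = (P C).toReal * t₀ := by
    have h1 : Tendsto (fun k => ∫ x, C.indicator (fun _ => (1:ℝ)) x * g k x ∂P) atTop
        (𝓝 (∫ x, C.indicator (fun _ => (1:ℝ)) x * f x ∂P)) := by
      refine tendsto_integral_of_dominated_convergence (fun _ => (1:ℝ))
        (fun k => ((measurable_const.indicator hC).mul (hg_meas k)).aestronglyMeasurable)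
        (integrable_const 1) (fun k => ae_of_all _ fun x => ?_) ?_
      · rw [Real.norm_eq_abs, abs_mul]
        have hi0 : (0:ℝ) ≤ C.indicator (fun _ => (1:ℝ)) x :=
          Set.indicator_nonneg (fun _ _ => zero_le_one) x
        have hi1 : C.indicator (fun _ => (1:ℝ)) x ≤ 1 := by
          by_cases hxC : x ∈ C <;> simp [Set.indicator, hxC]
        rw [abs_of_nonneg hi0, abs_of_nonneg (hg0 k x)]
        calc C.indicator (fun _ => (1:ℝ)) x * g k x ≤ 1 * 1 :=
              mul_le_mul hi1 (hg1 k x) (hg0 k x) zero_le_one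
          _ = 1 := by ring
      · exact hconv_ae.mono fun x hx => hx.const_mul _
    simp only [int_Cg] at h1
    have h2 : ∫ x, C.indicator (fun _ => (1:ℝ)) x * f x ∂P = (P C).toReal * t₀ := by
      rw [integral_congr_ae (ht₀.mono fun x hx => by rw [hx])]
      have h3 : (fun x => C.indicator (fun _ => (1:ℝ)) x * t₀)
          = C.indicator (fun _ => t₀) := by
        funext x
        by_cases hxC : x ∈ C <;> simp [Set.indicator, hxC]
      rw [h3, integral_indicator_const t₀ hC, smul_eq_mul, measureReal_def]
    rw [← h2]
    exact tendsto_const_nhds_iff.mp h1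
  -- conclusion
  have hL : (P (C ∩ B n₀)).toReal = c := hcn n₀ hn₀
  have hR : (P C * P (B 0)).toReal = (P C).toReal * β := by
    rw [ENNReal.toReal_mul, hβn 0]
  have hfin2 : (P (C ∩ B n₀)).toReal = (P C * P (B 0)).toReal := by
    rw [hL, hR, hc, hβt]
  have := (ENNReal.toReal_eq_toReal_iff' (measure_ne_top P _)
    (ENNReal.mul_ne_top (measure_ne_top P _) (measure_ne_top P _))).mp hfin2
  exact this


lemma prod_formula (P : Measure (ℕ → ℝ)) [IsProbabilityMeasure P]
    (hinv : ∀ g : Equiv.Perm ℕ, {n | g n ≠ n}.Finite → P.map (fun x n => x (g n)) = P)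
    (herg : ∀ S : Set (ℕ → ℝ), MeasurableSet S →
      (∀ g : Equiv.Perm ℕ, {n | g n ≠ n}.Finite → (fun x (n : ℕ) => x (g n)) ⁻¹' S = S) →
      P S = 0 ∨ P S = 1)
    (s : Finset ℕ) : ∀ (A : ℕ → Set ℝ), (∀ i, MeasurableSet (A i)) →
    P {x | ∀ i ∈ s, x i ∈ A i} = ∏ i ∈ s, P {x | x 0 ∈ A i} := by
  classical
  induction s using Finset.induction_on with
  | empty =>
    intro A hA
    have h : {x : ℕ → ℝ | ∀ i ∈ (∅ : Finset ℕ), x i ∈ A i} = Set.univ := by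
      ext x; simp
    simp [h]
  | @insert j s hj ih =>
    intro A hA
    set m := (insert j s).sup id + 1 with hm
    have hjm : j < m := by
      have : id j ≤ (insert j s).sup id := Finset.le_sup (Finset.mem_insert_self j s)
      simp only [id] at this
      omega
    have hsm : ∀ i ∈ s, i < m := by
      intro i hi
      have : id i ≤ (insert j s).sup id := Finset.le_sup (Finset.mem_insert_of_mem hi)
      simp only [id] at this
      omega
    have hswap := P_preimage P hinv (Equiv.swap j m) (swap_finite j m)
      (meas_C (insert j s) A hA)
    have hpre : (fun x (k : ℕ) => x (Equiv.swap j m k)) ⁻¹'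
        {x : ℕ → ℝ | ∀ i ∈ insert j s, x i ∈ A i}
        = {x : ℕ → ℝ | ∀ i ∈ s, x i ∈ A i} ∩ {x | x m ∈ A j} := by
      ext x
      simp only [Set.mem_preimage, Set.mem_setOf_eq, Set.mem_inter_iff, Finset.mem_insert]
      constructor
      · intro h
        refine ⟨fun i hi => ?_, ?_⟩
        · have hij : i ≠ j := fun hij => hj (hij ▸ hi)
          have him : i ≠ m := Nat.ne_of_lt (hsm i hi)
          have := h i (Or.inr hi)
          rwa [Equiv.swap_apply_of_ne_of_ne hij him] at this
        · have := h j (Or.inl rfl)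
          rwa [Equiv.swap_apply_left] at this
      · rintro ⟨h1, h2⟩ i hi
        rcases hi with rfl | hi
        · rwa [Equiv.swap_apply_left]
        · have hij : i ≠ i → False := fun h => h rfl
          have hij' : i ≠ j := fun hij => hj (hij ▸ hi)
          have him : i ≠ m := Nat.ne_of_lt (hsm i hi)
          rw [Equiv.swap_apply_of_ne_of_ne hij' him]
          exact h1 i hi
    rw [← hswap, hpre]
    rw [indep_step P hinv herg s A hA (hA j) hsm (le_refl m)]
    rw [ih A hA, Finset.prod_insert hj]
    ring

end DeFinettiAux

/-- De Finetti's theorem: every Borel probability measure on `ℝ^ℕ` invariant and ergodic under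
the finite permutations of coordinates is an i.i.d. product measure. -/
theorem stmt_16 (P : Measure (ℕ → ℝ)) [IsProbabilityMeasure P]
    (hinv : ∀ g : Equiv.Perm ℕ, {n | g n ≠ n}.Finite →
      P.map (fun x n => x (g n)) = P)
    (herg : ∀ S : Set (ℕ → ℝ), MeasurableSet S →
      (∀ g : Equiv.Perm ℕ, {n | g n ≠ n}.Finite → (fun x (n : ℕ) => x (g n)) ⁻¹' S = S) →
      P S = 0 ∨ P S = 1) :
    ∃ μ : Measure ℝ, IsProbabilityMeasure μ ∧ IsProductMeasure μ P := by
  refine ⟨P.map (fun x => x 0), Measure.isProbabilityMeasure_map (measurable_pi_apply 0).aemeasurable, ?_⟩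
  intro s A hA
  have hμ : ∀ i, (P.map (fun x : ℕ → ℝ => x 0)) (A i) = P {x | x 0 ∈ A i} := by
    intro i
    rw [Measure.map_apply (measurable_pi_apply 0) (hA i)]
    rfl
  rw [Finset.prod_congr rfl (fun i _ => hμ i)]
  exact prod_formula P hinv herg s A hA
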